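/- Let n ≥ 2 and let X₁, X₂ be elements of a commutative ring. The determinant of the 4×4 matrix with rows (1, X₁, X₁², X₁³), (n·1, (n+1)X₁, (n+2)X₁², (n+3)X₁³), (1, X₂, X₂², X₂³), (n·1, (n+1)X₂, (n+2)X₂², (n+3)X₂³) equals X₁X₂(X₂ − X₁)⁴. -/

import Mathlib

theorem det_block_binom_power_m2_l2 {R : Type*} [CommRing R] (n : ℕ) (hn : 2 ≤ n)
    (X₁ X₂ : R) :
    Matrix.det !![1, X₁, X₁ ^ 2, X₁ ^ 3;
                  (n : R) * 1, ((n : R) + 1) * X₁, ((n : R) + 2) * X₁ ^ 2, ((n : R) + 3) * X₁ ^ 3;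
                  1, X₂, X₂ ^ 2, X₂ ^ 3;
                  (n : R) * 1, ((n : R) + 1) * X₂, ((n : R) + 2) * X₂ ^ 2, ((n : R) + 3) * X₂ ^ 3]
      = X₁ * X₂ * (X₂ - X₁) ^ 4 := by
  simp [Matrix.det_succ_row_zero, Fin.sum_univ_succ, Fin.succAbove, Fin.castSucc, Fin.castAdd, Fin.castLE]
  ring
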